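/- Under the hypotheses of the previous statement, if in addition for all x, y ∈ Fix T the scalar product ⟨x_m^ε, x − y⟩ converges as ε → 0, then there exists x̄ ∈ Fix T such that x_i^ε ⇀ x̄ weakly as ε → 0 for every i. -/

import Mathlib

open Filter Topology
open scoped RealInnerProductSpace

set_option maxHeartbeats 1000000 in
theorem stmt8 {H : Type*} [NormedAddCommGroup H] [InnerProductSpace ℝ H] [CompleteSpace H]
    (D : Set H) (hD : D.Nonempty) (hDc : IsClosed D) (hDconv : Convex ℝ D)
    (m : ℕ) (hm : 2 ≤ m) (T : ℕ → H → H)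
    (hmap : ∀ i ∈ Finset.Icc 1 m, Set.MapsTo (T i) D D)
    (hne : ∀ i ∈ Finset.Icc 1 m, ∀ x ∈ D, ∀ y ∈ D, ‖T i x - T i y‖ ≤ ‖x - y‖)
    (η : ℝ) (hη : η ∈ Set.Ioc (0:ℝ) 1)
    (x : ℝ → ℕ → H)
    (hxD : ∀ ε ∈ Set.Ioo 0 η, ∀ i ≤ m, x ε i ∈ D)
    (hx0 : ∀ ε ∈ Set.Ioo 0 η, x ε 0 = x ε m)
    (hcyc : ∀ ε ∈ Set.Ioo 0 η, ∀ i ∈ Finset.Icc 1 m,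
      x ε i = x ε (i - 1) + ε • (T i (x ε (i - 1)) - x ε (i - 1)))
    (hbdd : ∃ β : ℝ, ∀ ε ∈ Set.Ioo 0 η, ‖x ε m‖ ≤ β)
    (hconv : ∀ p ∈ D, (m:ℝ)⁻¹ • (∑ i ∈ Finset.Icc 1 m, T i p) = p →
      ∀ q ∈ D, (m:ℝ)⁻¹ • (∑ i ∈ Finset.Icc 1 m, T i q) = q →
      ∃ L : ℝ, Tendsto (fun ε => ⟪x ε m, p - q⟫) (𝓝[Set.Ioo 0 η] 0) (𝓝 L)) :
    ∃ xbar ∈ D, (m:ℝ)⁻¹ • (∑ i ∈ Finset.Icc 1 m, T i xbar) = xbar ∧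
      ∀ i ∈ Finset.Icc 1 m, ∀ v : H,
        Tendsto (fun ε => ⟪x ε i, v⟫) (𝓝[Set.Ioo 0 η] 0) (𝓝 ⟪xbar, v⟫) := by
  obtain ⟨hη0, hη1⟩ := hη
  set F : Filter ℝ := 𝓝[Set.Ioo 0 η] 0 with hFdef
  have hFne : F.NeBot := by
    apply mem_closure_iff_nhdsWithin_neBot.mp
    rw [closure_Ioo (ne_of_lt hη0)]
    exact Set.left_mem_Icc.mpr hη0.le
  have hIooF : Set.Ioo 0 η ∈ F := self_mem_nhdsWithin
  obtain ⟨β, hβ⟩ := hbdd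
  have hεex : (η/2) ∈ Set.Ioo (0:ℝ) η := ⟨by linarith, by linarith⟩
  have hβ0 : 0 ≤ β := le_trans (norm_nonneg _) (hβ _ hεex)
  obtain ⟨p₀, hp₀⟩ := hD
  set c : ℝ := ∑ j ∈ Finset.Icc 1 m, (‖T j p₀ - p₀‖ + 2*‖p₀‖) with hcdef
  have hc0 : 0 ≤ c := Finset.sum_nonneg fun j _ => by positivity
  have hcj : ∀ j ∈ Finset.Icc 1 m, ‖T j p₀ - p₀‖ + 2*‖p₀‖ ≤ c := fun j hj =>
    Finset.single_le_sum (f := fun j => ‖T j p₀ - p₀‖ + 2*‖p₀‖) (fun i _ => by positivity) hj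
  -- step displacement bound
  have hTstep : ∀ y ∈ D, ∀ j ∈ Finset.Icc 1 m, ‖T j y - y‖ ≤ 2*‖y‖ + c := by
    intro y hy j hj
    have h1 : ‖T j y - y‖ ≤ ‖T j y - T j p₀‖ + ‖T j p₀ - p₀‖ + ‖p₀ - y‖ := by
      have := norm_add₃_le (a := T j y - T j p₀) (b := T j p₀ - p₀) (c := p₀ - y)
      simpa using this
    have h2 : ‖T j y - T j p₀‖ ≤ ‖y - p₀‖ := hne j hj y hy p₀ hp₀
    have h3 : ‖y - p₀‖ ≤ ‖y‖ + ‖p₀‖ := norm_sub_le _ _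
    have h4 : ‖p₀ - y‖ ≤ ‖y‖ + ‖p₀‖ := by
      rw [norm_sub_rev]; exact norm_sub_le _ _
    have := hcj j hj
    linarith
  -- uniform bound on all iterates
  set M : ℝ := 4^m * (β + c) with hMdef
  have hβc0 : 0 ≤ β + c := by linarith
  have hxM : ∀ ε ∈ Set.Ioo 0 η, ∀ i ≤ m, ‖x ε i‖ ≤ M := by
    intro ε hε
    have haux : ∀ i ≤ m, ‖x ε i‖ ≤ 4^i * (β + c) := by
      intro i
      induction i with
      | zero =>
        intro _
        rw [hx0 ε hε]
        simpa using le_trans (hβ ε hε) (by linarith)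
      | succ j ih =>
        intro hjm
        have hj' : j ≤ m := Nat.le_of_succ_le hjm
        have hmem : j + 1 ∈ Finset.Icc 1 m := Finset.mem_Icc.mpr ⟨Nat.succ_le_succ (Nat.zero_le _), hjm⟩
        have hrec := hcyc ε hε (j+1) hmem
        simp only [Nat.add_sub_cancel] at hrec
        have hD' : x ε j ∈ D := hxD ε hε j hj'
        have hstep := hTstep (x ε j) hD' (j+1) hmem
        have hnorm : ‖x ε (j+1)‖ ≤ ‖x ε j‖ + ε * (2*‖x ε j‖ + c) := by
          rw [hrec]
          calc ‖x ε j + ε • (T (j+1) (x ε j) - x ε j)‖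
              ≤ ‖x ε j‖ + ‖ε • (T (j+1) (x ε j) - x ε j)‖ := norm_add_le _ _
            _ = ‖x ε j‖ + |ε| * ‖T (j+1) (x ε j) - x ε j‖ := by rw [norm_smul, Real.norm_eq_abs]
            _ ≤ ‖x ε j‖ + ε * (2*‖x ε j‖ + c) := by
                rw [abs_of_pos hε.1]
                have : 0 ≤ ε := hε.1.le
                nlinarith [norm_nonneg (T (j+1) (x ε j) - x ε j)]
        have hε1 : ε ≤ 1 := le_trans hε.2.le hη1
        have hxj0 : (0:ℝ) ≤ ‖x ε j‖ := norm_nonneg _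
        have h4j : (1:ℝ) ≤ 4^j := one_le_pow₀ (by norm_num)
        have := ih hj'
        calc ‖x ε (j+1)‖ ≤ ‖x ε j‖ + ε * (2*‖x ε j‖ + c) := hnorm
          _ ≤ 3*‖x ε j‖ + c := by nlinarith
          _ ≤ 3*(4^j*(β+c)) + 4^j*(β+c) := by nlinarith
          _ = 4^(j+1) * (β+c) := by ring
    intro i hi
    refine le_trans (haux i hi) ?_
    have : (4:ℝ)^i ≤ 4^m := pow_le_pow_right₀ (by norm_num) hi
    rw [hMdef]; nlinarith
  -- per-step difference bound
  set K : ℝ := 2*M + c with hKdef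
  have hM0 : 0 ≤ M := by rw [hMdef]; positivity
  have hK0 : 0 ≤ K := by rw [hKdef]; linarith
  have hstep : ∀ ε ∈ Set.Ioo 0 η, ∀ i ∈ Finset.Icc 1 m, ‖x ε i - x ε (i-1)‖ ≤ ε * K := by
    intro ε hε i hi
    have hi1 := (Finset.mem_Icc.mp hi).1
    have him := (Finset.mem_Icc.mp hi).2
    have hi1m : i - 1 ≤ m := le_trans (Nat.sub_le _ _) him
    have hrec := hcyc ε hε i hi
    have hD' : x ε (i-1) ∈ D := hxD ε hε _ hi1m
    have hT := hTstep (x ε (i-1)) hD' i hi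
    have hMi := hxM ε hε (i-1) hi1m
    rw [hrec]
    have : ‖x ε (i-1) + ε • (T i (x ε (i-1)) - x ε (i-1)) - x ε (i-1)‖
        = ε * ‖T i (x ε (i-1)) - x ε (i-1)‖ := by
      rw [add_sub_cancel_left, norm_smul, Real.norm_eq_abs, abs_of_pos hε.1]
    rw [this, hKdef]
    have := hε.1.le
    nlinarith [norm_nonneg (T i (x ε (i-1)) - x ε (i-1))]
  -- distance of each iterate from x ε m
  have hdiff : ∀ ε ∈ Set.Ioo 0 η, ∀ i ≤ m, ‖x ε m - x ε i‖ ≤ ε * (m * K) := by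
    intro ε hε i him
    have key : ∀ k, i + k ≤ m → ‖x ε (i+k) - x ε i‖ ≤ ε * (k * K) := by
      intro k
      induction k with
      | zero => intro _; simp
      | succ l ih =>
        intro hl
        have hl' : i + l ≤ m := by omega
        have hmem : i + l + 1 ∈ Finset.Icc 1 m := Finset.mem_Icc.mpr ⟨by omega, by omega⟩
        have h1 := hstep ε hε (i+l+1) hmem
        simp only [Nat.add_sub_cancel] at h1
        have h2 := ih hl'
        calc ‖x ε (i + (l+1)) - x ε i‖
            = ‖(x ε (i+l+1) - x ε (i+l)) + (x ε (i+l) - x ε i)‖ := by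
              rw [show i+(l+1) = i+l+1 from rfl]; congr 1; abel
          _ ≤ ‖x ε (i+l+1) - x ε (i+l)‖ + ‖x ε (i+l) - x ε i‖ := norm_add_le _ _
          _ ≤ ε * K + ε * (l * K) := add_le_add h1 h2
          _ = ε * (((l:ℝ)+1) * K) := by ring
          _ = ε * (((l+1:ℕ):ℝ) * K) := by push_cast; ring
    have := key (m - i) (by omega)
    have heq : i + (m - i) = m := by omega
    rw [heq] at this
    refine le_trans this ?_
    have hmi : ((m-i:ℕ):ℝ) ≤ (m:ℝ) := Nat.cast_le.mpr (Nat.sub_le _ _)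
    have h0ε := hε.1.le
    have := mul_le_mul_of_nonneg_right hmi hK0
    nlinarith
  have hm0 : (0:ℝ) < m := by positivity
  have hcard : (Finset.Icc 1 m).card = m := by rw [Nat.card_Icc]; omega
  set S : H → H := fun z => (m:ℝ)⁻¹ • ∑ i ∈ Finset.Icc 1 m, T i z with hSdef
  -- nonexpansiveness of the average map
  have hSne : ∀ y ∈ D, ∀ z ∈ D, ‖S y - S z‖ ≤ ‖y - z‖ := by
    intro y hy z hz
    have h1 : S y - S z = (m:ℝ)⁻¹ • ∑ i ∈ Finset.Icc 1 m, (T i y - T i z) := by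
      rw [hSdef]; simp only [← smul_sub, Finset.sum_sub_distrib]
    rw [h1, norm_smul, Real.norm_eq_abs, abs_of_pos (by positivity)]
    have h2 : ‖∑ i ∈ Finset.Icc 1 m, (T i y - T i z)‖ ≤ m * ‖y - z‖ := by
      refine le_trans (norm_sum_le _ _) ?_
      calc ∑ i ∈ Finset.Icc 1 m, ‖T i y - T i z‖
          ≤ ∑ _i ∈ Finset.Icc 1 m, ‖y - z‖ :=
            Finset.sum_le_sum fun i hi => hne i hi y hy z hz
        _ = m * ‖y - z‖ := by rw [Finset.sum_const, hcard, nsmul_eq_mul]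
    calc (m:ℝ)⁻¹ * ‖∑ i ∈ Finset.Icc 1 m, (T i y - T i z)‖
        ≤ (m:ℝ)⁻¹ * (m * ‖y - z‖) := by
          exact mul_le_mul_of_nonneg_left h2 (by positivity)
      _ = ‖y - z‖ := by field_simp
  -- telescoping : the cycle sum vanishes
  have tele : ∀ (f : ℕ → H) (n : ℕ), ∑ i ∈ Finset.Icc 1 n, (f i - f (i-1)) = f n - f 0 := by
    intro f n
    induction n with
    | zero => simp
    | succ k ih =>
      rw [Finset.sum_Icc_succ_top (Nat.one_le_iff_ne_zero.mpr (Nat.succ_ne_zero k)), ih]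
      simp only [Nat.add_sub_cancel]
      abel
  have hsum0 : ∀ ε ∈ Set.Ioo 0 η,
      ∑ i ∈ Finset.Icc 1 m, (T i (x ε (i-1)) - x ε (i-1)) = 0 := by
    intro ε hε
    have h1 : ε • ∑ i ∈ Finset.Icc 1 m, (T i (x ε (i-1)) - x ε (i-1))
        = ∑ i ∈ Finset.Icc 1 m, (x ε i - x ε (i-1)) := by
      rw [Finset.smul_sum]
      refine Finset.sum_congr rfl fun i hi => ?_
      rw [hcyc ε hε i hi]; abel
    rw [tele (x ε) m, ← hx0 ε hε, sub_self] at h1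
    rcases smul_eq_zero.mp h1 with h | h
    · exact absurd h (ne_of_gt hε.1)
    · exact h
  -- almost fixed point estimate
  have hδ : ∀ ε ∈ Set.Ioo 0 η, ‖S (x ε m) - x ε m‖ ≤ ε * (2*m*K) := by
    intro ε hε
    set z := x ε m with hz
    have hzD : z ∈ D := hxD ε hε m le_rfl
    have h1 : S z - z = (m:ℝ)⁻¹ • ∑ i ∈ Finset.Icc 1 m, (T i z - z) := by
      rw [hSdef]
      simp only [Finset.sum_sub_distrib, smul_sub, Finset.sum_const, hcard]
      congr 1
      rw [← Nat.cast_smul_eq_nsmul ℝ m z, smul_smul, inv_mul_cancel₀ (ne_of_gt hm0), one_smul]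
    have h2 : ∑ i ∈ Finset.Icc 1 m, (T i z - z)
        = ∑ i ∈ Finset.Icc 1 m, ((T i z - z) - (T i (x ε (i-1)) - x ε (i-1))) := by
      conv_rhs => rw [Finset.sum_sub_distrib]
      rw [hsum0 ε hε, sub_zero]
    have hterm : ∀ i ∈ Finset.Icc 1 m,
        ‖(T i z - z) - (T i (x ε (i-1)) - x ε (i-1))‖ ≤ 2*(ε*(m*K)) := by
      intro i hi
      have hi1m : i - 1 ≤ m := le_trans (Nat.sub_le _ _) (Finset.mem_Icc.mp hi).2
      have hD' : x ε (i-1) ∈ D := hxD ε hε _ hi1m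
      have hdz := hdiff ε hε (i-1) hi1m
      calc ‖(T i z - z) - (T i (x ε (i-1)) - x ε (i-1))‖
          = ‖(T i z - T i (x ε (i-1))) + (x ε (i-1) - z)‖ := by congr 1; abel
        _ ≤ ‖T i z - T i (x ε (i-1))‖ + ‖x ε (i-1) - z‖ := norm_add_le _ _
        _ ≤ ‖z - x ε (i-1)‖ + ‖x ε (i-1) - z‖ := by
            exact add_le_add_left (hne i hi z hzD _ hD') _
        _ = 2 * ‖z - x ε (i-1)‖ := by rw [norm_sub_rev (x ε (i-1))]; ring
        _ ≤ 2*(ε*(m*K)) := by linarith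
    have h3 : ‖∑ i ∈ Finset.Icc 1 m, ((T i z - z) - (T i (x ε (i-1)) - x ε (i-1)))‖
        ≤ m * (2*(ε*(m*K))) := by
      refine le_trans (norm_sum_le _ _) ?_
      calc ∑ i ∈ Finset.Icc 1 m, ‖(T i z - z) - (T i (x ε (i-1)) - x ε (i-1))‖
          ≤ ∑ _i ∈ Finset.Icc 1 m, 2*(ε*(m*K)) := Finset.sum_le_sum hterm
        _ = m * (2*(ε*(m*K))) := by rw [Finset.sum_const, hcard, nsmul_eq_mul]
    rw [h1, h2, norm_smul, Real.norm_eq_abs, abs_of_pos (by positivity)]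
    calc (m:ℝ)⁻¹ * ‖∑ i ∈ Finset.Icc 1 m, ((T i z - z) - (T i (x ε (i-1)) - x ε (i-1)))‖
        ≤ (m:ℝ)⁻¹ * (m * (2*(ε*(m*K)))) := mul_le_mul_of_nonneg_left h3 (by positivity)
      _ = ε * (2*m*K) := by field_simp
  -- key ultrafilter lemma : along every ultrafilter refining F, x ε m converges weakly
  -- to a fixed point of S lying in D
  have keyU : ∀ U : Ultrafilter ℝ, ↑U ≤ F → ∃ q ∈ D, S q = q ∧
      ∀ v : H, Tendsto (fun ε => ⟪x ε m, v⟫) ↑U (𝓝 ⟪q, v⟫) := by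
    intro U hU
    have hmemU : Set.Ioo 0 η ∈ (U : Filter ℝ) := hU hIooF
    set y : ℝ → WeakDual ℝ H := fun ε => (InnerProductSpace.toDual ℝ H (x ε m) : H →L[ℝ] ℝ)
      with hydef
    have hys : ∀ᶠ ε in (U : Filter ℝ),
        y ε ∈ (WeakDual.toStrongDual ⁻¹' Metric.closedBall 0 β : Set (WeakDual ℝ H)) := by
      filter_upwards [hmemU] with ε hε
      simp only [Set.mem_preimage, mem_closedBall_zero_iff, hydef]
      refine mem_closedBall_zero_iff.mpr ?_
      calc ‖(WeakDual.toStrongDual (InnerProductSpace.toDual ℝ H (x ε m) : H →L[ℝ] ℝ))‖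
          = ‖x ε m‖ := by
            rw [show WeakDual.toStrongDual ((InnerProductSpace.toDual ℝ H (x ε m)
              : H →L[ℝ] ℝ) : WeakDual ℝ H) = InnerProductSpace.toDual ℝ H (x ε m) from rfl]
            exact (InnerProductSpace.toDual ℝ H).norm_map _
        _ ≤ β := hβ ε hε
    obtain ⟨φ, hφs, hφ⟩ := (WeakDual.isCompact_closedBall (𝕜 := ℝ) (E := H) 0 β).ultrafilter_le_nhds
      (U.map y) (le_principal_iff.mpr hys)
    have hφ' : Tendsto y (U : Filter ℝ) (𝓝 φ) := by rwa [Ultrafilter.coe_map] at hφ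
    set q : H := (InnerProductSpace.toDual ℝ H).symm (WeakDual.toStrongDual φ) with hqdef
    have hweak : ∀ v : H, Tendsto (fun ε => ⟪x ε m, v⟫) ↑U (𝓝 ⟪q, v⟫) := by
      intro v
      have h := tendsto_iff_forall_eval_tendsto_topDualPairing.mp hφ' v
      have h1 : ∀ ε, (topDualPairing ℝ H) (y ε) v = ⟪x ε m, v⟫ := fun ε => by
        rw [topDualPairing_apply]
        exact InnerProductSpace.toDual_apply_apply
      have h2 : (topDualPairing ℝ H) φ v = ⟪q, v⟫ := by
        rw [hqdef, InnerProductSpace.toDual_symm_apply]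
        rfl
      simpa only [h1, h2] using h
    have hqD : q ∈ D := by
      by_contra hq
      obtain ⟨f, u, hfD, hfq⟩ := geometric_hahn_banach_closed_point hDconv hDc hq
      set w : H := (InnerProductSpace.toDual ℝ H).symm f with hwdef
      have hfw : ∀ z : H, f z = ⟪z, w⟫ := fun z => by
        rw [real_inner_comm, hwdef, InnerProductSpace.toDual_symm_apply]
      have h1 : Tendsto (fun ε => ⟪x ε m, w⟫) ↑U (𝓝 ⟪q, w⟫) := hweak w
      have h2 : ∀ᶠ ε in (U : Filter ℝ), ⟪x ε m, w⟫ ≤ u := by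
        filter_upwards [hmemU] with ε hε
        rw [← hfw]
        exact (hfD _ (hxD ε hε m le_rfl)).le
      have h3 : ⟪q, w⟫ ≤ u := le_of_tendsto h1 h2
      rw [← hfw] at h3
      linarith
    -- demiclosedness argument : q is a fixed point of S
    set g : ℝ → ℝ := fun ε => ‖x ε m - q‖ with hgdef
    have hgmem : ∀ᶠ ε in (U : Filter ℝ), g ε ∈ Set.Icc 0 (β + ‖q‖) := by
      filter_upwards [hmemU] with ε hε
      exact ⟨norm_nonneg _, le_trans (norm_sub_le _ _) (add_le_add_left (hβ ε hε) _)⟩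
    obtain ⟨b, hbmem, hble⟩ := (isCompact_Icc (a := (0:ℝ)) (b := β + ‖q‖)).ultrafilter_le_nhds
      (U.map g) (le_principal_iff.mpr hgmem)
    have hgb : Tendsto g (U : Filter ℝ) (𝓝 b) := by rwa [Ultrafilter.coe_map] at hble
    have hδ0 : Tendsto (fun ε => ‖S (x ε m) - x ε m‖) (U : Filter ℝ) (𝓝 0) := by
      refine Tendsto.mono_left ?_ hU
      have hbnd : Tendsto (fun ε : ℝ => ε * (2*m*K)) F (𝓝 0) := by
        have h0 : Tendsto (fun ε : ℝ => ε) F (𝓝 0) := by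
          rw [hFdef]
          exact tendsto_id.mono_left nhdsWithin_le_nhds
        have := h0.mul_const (2*m*K)
        simpa using this
      refine squeeze_zero' ?_ ?_ hbnd
      · filter_upwards [hIooF] with ε _ using norm_nonneg _
      · filter_upwards [hIooF] with ε hε using hδ ε hε
    have hw0 : Tendsto (fun ε => ⟪x ε m - q, q - S q⟫) (U : Filter ℝ) (𝓝 0) := by
      have h := (hweak (q - S q)).sub (tendsto_const_nhds (x := ⟪q, q - S q⟫))
      simp only [sub_self] at h
      simpa only [inner_sub_left] using h
    have hineq : ∀ᶠ ε in (U : Filter ℝ),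
        ‖q - S q‖^2 + (g ε)^2 + 2*⟪x ε m - q, q - S q⟫
          ≤ (‖S (x ε m) - x ε m‖ + g ε)^2 := by
      filter_upwards [hmemU] with ε hε
      have hxε : x ε m ∈ D := hxD ε hε m le_rfl
      have e1 : ‖x ε m - S q‖^2 = (g ε)^2 + 2*⟪x ε m - q, q - S q⟫ + ‖q - S q‖^2 := by
        have hsplit : x ε m - S q = (x ε m - q) + (q - S q) := by abel
        rw [hsplit, norm_add_sq_real, hgdef]
      have e2 : ‖x ε m - S q‖ ≤ ‖S (x ε m) - x ε m‖ + g ε := by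
        have h1 := norm_add_le (x ε m - S (x ε m)) (S (x ε m) - S q)
        have h2 : ‖S (x ε m) - S q‖ ≤ ‖x ε m - q‖ := hSne (x ε m) hxε q hqD
        have h3 : ‖x ε m - S (x ε m)‖ = ‖S (x ε m) - x ε m‖ := norm_sub_rev _ _
        have h4 : x ε m - S (x ε m) + (S (x ε m) - S q) = x ε m - S q := by abel
        rw [h4, h3] at h1
        calc ‖x ε m - S q‖ ≤ ‖S (x ε m) - x ε m‖ + ‖S (x ε m) - S q‖ := h1
          _ ≤ ‖S (x ε m) - x ε m‖ + g ε := by rw [hgdef]; exact add_le_add_right h2 _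
      have e3 : ‖x ε m - S q‖^2 ≤ (‖S (x ε m) - x ε m‖ + g ε)^2 :=
        pow_le_pow_left₀ (norm_nonneg _) e2 2
      linarith
    have hlim1 : Tendsto (fun ε => ‖q - S q‖^2 + (g ε)^2 + 2*⟪x ε m - q, q - S q⟫)
        (U : Filter ℝ) (𝓝 (‖q - S q‖^2 + b^2 + 2*0)) :=
      (tendsto_const_nhds.add (hgb.pow 2)).add (hw0.const_mul 2)
    have hlim2 : Tendsto (fun ε => (‖S (x ε m) - x ε m‖ + g ε)^2)
        (U : Filter ℝ) (𝓝 ((0 + b)^2)) := (hδ0.add hgb).pow 2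
    have hle := le_of_tendsto_of_tendsto hlim1 hlim2 hineq
    have hq0 : ‖q - S q‖ = 0 := by nlinarith [norm_nonneg (q - S q), sq_nonneg (‖q - S q‖)]
    have hfix : S q = q := (sub_eq_zero.mp (norm_eq_zero.mp hq0)).symm
    exact ⟨q, hqD, hfix, hweak⟩
  -- choose a reference ultrafilter and get the candidate limit point
  obtain ⟨U₀, hU₀⟩ := Ultrafilter.exists_le F
  obtain ⟨p, hpD, hpfix, hpweak⟩ := keyU U₀ hU₀
  -- weak convergence of x ε m along the whole filter F
  have hmain : ∀ v : H, Tendsto (fun ε => ⟪x ε m, v⟫) F (𝓝 ⟪p, v⟫) := by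
    intro v
    rw [tendsto_iff_ultrafilter]
    intro U hUF
    obtain ⟨q, hqD, hqfix, hqweak⟩ := keyU U hUF
    obtain ⟨L, hL⟩ := hconv p hpD hpfix q hqD hqfix
    have h1 : L = ⟪p, p - q⟫ := tendsto_nhds_unique (hL.mono_left hU₀) (hpweak (p - q))
    have h2 : L = ⟪q, p - q⟫ := tendsto_nhds_unique (hL.mono_left hUF) (hqweak (p - q))
    have hpq : p = q := by
      have h3 : ⟪p - q, p - q⟫ = 0 := by rw [inner_sub_left]; linarith
      exact sub_eq_zero.mp (inner_self_eq_zero.mp h3)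
    rw [hpq]
    exact hqweak v
  refine ⟨p, hpD, hpfix, ?_⟩
  intro i hi v
  have him := (Finset.mem_Icc.mp hi).2
  have hdz : Tendsto (fun ε => ⟪x ε m - x ε i, v⟫) F (𝓝 0) := by
    apply squeeze_zero_norm' (a := fun ε => ε * (m*K) * ‖v‖)
    · filter_upwards [hIooF] with ε hε
      rw [Real.norm_eq_abs]
      calc |⟪x ε m - x ε i, v⟫| ≤ ‖x ε m - x ε i‖ * ‖v‖ := abs_real_inner_le_norm _ _
        _ ≤ ε * (m*K) * ‖v‖ :=
          mul_le_mul_of_nonneg_right (hdiff ε hε i him) (norm_nonneg v)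
    · have h0 : Tendsto (fun ε : ℝ => ε) F (𝓝 0) := by
        rw [hFdef]
        exact tendsto_id.mono_left nhdsWithin_le_nhds
      simpa using (h0.mul_const ((m:ℝ)*K)).mul_const ‖v‖
  have hfin := (hmain v).sub hdz
  have heq : (fun ε => ⟪x ε m, v⟫ - ⟪x ε m - x ε i, v⟫) = fun ε => ⟪x ε i, v⟫ := by
    funext ε
    rw [inner_sub_left]
    ring
  rw [heq] at hfin
  simpa using hfin
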